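/- The odd lowering operator f̃₁' on primed tableaux is well-defined and partially inverse to the odd raising operator ẽ₁': for primed tableaux S, T ∈ PT_m(λ), f̃₁'(T) = S (with S ≠ 0) if and only if ẽ₁'(S) = T, where ẽ₁' changes T_{(1,1)} = 2 to 1, or the unique T_{(1,i)} = 2' (i ≥ 2) to 1, and f̃₁' changes the rightmost 1 in the first row at position (1,i) to 2 (if i = 1) or 2' (if i ≥ 2) provided the entry at (1,i+1) is not 2'. -/

import Mathlib

/-- A primed tableau, as a list of rows; an entry `(v, true)` denotes the primed
letter `v′` and `(v, false)` the unprimed letter `v`; row `i` (0-indexed) implicitly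
occupies absolute columns `i, i+1, …`. -/
abbrev PrimedTab := List (List (ℕ × Bool))

/-- The linear order `1′ < 1 < 2′ < 2 < ⋯` on primed letters, via a numeric key. -/
def pKey (x : ℕ × Bool) : ℕ := 2 * x.1 - (if x.2 then 1 else 0)

/-- `Q` is a primed tableau (semistandard marked shifted tableau) with entries among
`1′ < 1 < ⋯ < m′ < m`: shifted shape of a strict partition, rows and columns weakly
increasing, at most one `i′` per row, at most one `i` per column, no primed letters on
the main diagonal. -/
def IsPrimedTab (m : ℕ) (Q : PrimedTab) : Prop :=
  (∀ r ∈ Q, r ≠ []) ∧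
  List.Chain' (fun r s : List (ℕ × Bool) => s.length < r.length) Q ∧
  (∀ r ∈ Q, ∀ x ∈ r, 1 ≤ x.1 ∧ x.1 ≤ m) ∧
  (∀ r ∈ Q, List.Chain' (fun x y => pKey x ≤ pKey y) r) ∧
  (∀ i k x y, (Q.getD (i+1) [])[k]? = some x →
      (Q.getD i [])[k+1]? = some y → pKey y ≤ pKey x) ∧
  (∀ r ∈ Q, ∀ v : ℕ, (r.filter (fun x => decide (x = (v, true)))).length ≤ 1) ∧
  (∀ c r r' v, r < r' → r' ≤ c →
      (Q.getD r [])[c - r]? = some (v, false) →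
      (Q.getD r' [])[c - r']? = some (v, false) → False) ∧
  (∀ r x, (Q.getD r [])[0]? = some x → x.2 = false)

/-- The boxes of a primed tableau: triples (row, absolute column, entry). -/
def pBoxes (Q : PrimedTab) : List (ℕ × ℕ × ℕ × Bool) :=
  ((Q.zipIdx.map Prod.swap).map (fun p => (p.2.zipIdx.map Prod.swap).map (fun q => (p.1, p.1 + q.1, q.2)))).flatten

/-- The reading order used by standardization: boxes with smaller entries come first;
among equal primed entries `i′`, boxes are read top to bottom (by row); among equal
unprimed entries `i`, boxes are read left to right (by column). -/
def earlierB (a b : ℕ × ℕ × ℕ × Bool) : Bool :=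
  decide (pKey a.2.2 < pKey b.2.2) ||
    (decide (a.2.2 = b.2.2) &&
      (if b.2.2.2 then decide (a.1 < b.1) else decide (a.2.1 < b.2.1)))

/-- The standardization `st(Q)` of a primed tableau: each box receives as value one
plus the number of boxes preceding it in the reading order, keeping its primed flag. -/
def standardize (Q : PrimedTab) : PrimedTab :=
  (Q.zipIdx.map Prod.swap).map (fun p => (p.2.zipIdx.map Prod.swap).map (fun q =>
    (((pBoxes Q).filter (fun bx => earlierB bx (p.1, p.1 + q.1, q.2))).length + 1,
      q.2.2)))

/-- A standard primed tableau with `n` boxes: a primed tableau in which each of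
`1, …, n` appears exactly once (primed or unprimed). -/
def IsStandardPrimedTab (n : ℕ) (Q : PrimedTab) : Prop :=
  IsPrimedTab n Q ∧ (Q.flatten.map Prod.fst).Perm ((List.range n).map (· + 1))

/-- The odd raising operator `ẽ₁′` on primed tableaux: change `T_{(1,1)} = 2` to `1`,
or the (unique) `2′` in the first row to `1`; otherwise `0`. -/
def eOdd (T : PrimedTab) : Option PrimedTab :=
  let r := T.getD 0 []
  if r[0]? = some (2, false) then some (T.set 0 (r.set 0 (1, false)))
  else if (2, true) ∈ r then
    some (T.set 0 (r.set (r.idxOf (2, true)) (1, false)))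
  else none

/-- The odd lowering operator `f̃₁′` on primed tableaux: change the rightmost `1` in
the first row, at position `(1, i)`, to `2` if `i = 1` and to `2′` if `i ≥ 2`,
provided the entry immediately to its right is not `2′`; otherwise `0`. -/
def fOdd (T : PrimedTab) : Option PrimedTab :=
  let r := T.getD 0 []
  if (1, false) ∈ r then
    let i := r.length - 1 - r.reverse.idxOf (1, false)
    if r[i + 1]? = some (2, true) then none
    else some (T.set 0 (r.set i (if i = 0 then (2, false) else (2, true))))
  else none

-- key value facts
lemma pkey2 {x : ℕ × Bool} : pKey x = 2 ↔ x = (1, false) := by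
  obtain ⟨v, b⟩ := x; cases b <;> simp [pKey] <;> omega

lemma pkey3 {x : ℕ × Bool} : pKey x = 3 ↔ x = (2, true) := by
  obtain ⟨v, b⟩ := x; cases b <;> simp [pKey] <;> omega

lemma pkey_1f : pKey (1, false) = 2 := rfl
lemma pkey_2f : pKey (2, false) = 4 := rfl
lemma pkey_2t : pKey (2, true) = 3 := rfl

-- idxOf lemmas (over any lawful BEq, to match instance in defs)
lemma idx_cons {α} [BEq α] (a b : α) (l : List α) :
    (b :: l).idxOf a = if b == a then 0 else l.idxOf a + 1 := by
  simp [List.idxOf, List.findIdx_cons, Bool.cond_eq_ite]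

lemma idx_get? {α} [BEq α] [LawfulBEq α] {a : α} {l : List α} (h : a ∈ l) :
    l[l.idxOf a]? = some a := by
  induction l with
  | nil => simp at h
  | cons b l ih =>
    rw [idx_cons]
    by_cases hb : (b == a) = true
    · rw [if_pos hb]; simp [eq_of_beq hb]
    · rw [if_neg hb]
      simp only [List.getElem?_cons_succ]
      exact ih ((List.mem_cons.mp h).resolve_left
        (fun e => hb (by simp [e])))

lemma idx_min {α} [BEq α] [LawfulBEq α] {a : α} {l : List α} {k : ℕ}
    (hk : k < l.idxOf a) : l[k]? ≠ some a := by
  induction l generalizing k with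
  | nil => simp
  | cons b l ih =>
    rw [idx_cons] at hk
    by_cases hb : (b == a) = true
    · rw [if_pos hb] at hk; omega
    · rw [if_neg hb] at hk
      cases k with
      | zero =>
        simp only [List.getElem?_cons_zero, ne_eq, Option.some.injEq]
        exact fun e => hb (by simp [e])
      | succ n => simpa using ih (by omega)

lemma idx_eq {α} [BEq α] [LawfulBEq α] {a : α} {l : List α} {j : ℕ}
    (h1 : l[j]? = some a) (h2 : ∀ k < j, l[k]? ≠ some a) :
    l.idxOf a = j := by
  induction l generalizing j with
  | nil => simp at h1
  | cons b l ih =>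
    cases j with
    | zero =>
      simp only [List.getElem?_cons_zero, Option.some.injEq] at h1
      subst h1; rw [idx_cons, if_pos (by simp)]
    | succ n =>
      have hb : ¬ (b == a) = true := by
        intro hba; exact h2 0 (by omega) (by simp [eq_of_beq hba])
      rw [idx_cons, if_neg hb]
      simp only [List.getElem?_cons_succ] at h1
      rw [ih h1 (fun k hk => by simpa using h2 (k+1) (by omega))]

-- rightmost occurrence
lemma rI_get? {α} [BEq α] [LawfulBEq α] {a : α} {l : List α} (h : a ∈ l) :
    l[l.length - 1 - l.reverse.idxOf a]? = some a := by
  have hm : a ∈ l.reverse := List.mem_reverse.mpr h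
  have h0 := idx_get? hm
  have hj : l.reverse.idxOf a < l.length := by
    have := (List.getElem?_eq_some_iff.mp h0).1; simpa using this
  rwa [List.getElem?_reverse (by simpa using hj)] at h0

lemma rI_max {α} [BEq α] [LawfulBEq α] {a : α} {l : List α} (h : a ∈ l) :
    ∀ k, l.length - 1 - l.reverse.idxOf a < k → l[k]? ≠ some a := by
  intro k hk hka
  have hm : a ∈ l.reverse := List.mem_reverse.mpr h
  have hj : l.reverse.idxOf a < l.length := by
    have := (List.getElem?_eq_some_iff.mp (idx_get? hm)).1; simpa using this
  have hkl : k < l.length := by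
    by_contra hc
    rw [List.getElem?_eq_none_iff.mpr (by omega)] at hka; simp at hka
  have h1 : l.reverse[l.length - 1 - k]? = some a := by
    rw [List.getElem?_reverse (by omega)]
    have : l.length - 1 - (l.length - 1 - k) = k := by omega
    rwa [this]
  exact idx_min (by omega) h1

lemma rI_eq {α} [BEq α] [LawfulBEq α] {a : α} {l : List α} {i : ℕ}
    (h1 : l[i]? = some a) (h2 : ∀ k, i < k → l[k]? ≠ some a) :
    l.length - 1 - l.reverse.idxOf a = i := by
  have hil : i < l.length := by
    rcases List.getElem?_eq_some_iff.mp h1 with ⟨h, _⟩; exact h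
  have hj : l.reverse.idxOf a = l.length - 1 - i := by
    apply idx_eq
    · rw [List.getElem?_reverse (by omega)]
      have : l.length - 1 - (l.length - 1 - i) = i := by omega
      rwa [this]
    · intro k hk
      rw [List.getElem?_reverse (by omega)]
      exact h2 _ (by omega)
  rw [hj]; omega

-- chains via get?
lemma chain'_of_get? {l : List (ℕ × Bool)}
    (h : ∀ k x y, l[k]? = some x → l[k+1]? = some y → pKey x ≤ pKey y) :
    List.Chain' (fun x y => pKey x ≤ pKey y) l := by
  rw [List.Chain', List.isChain_iff_getElem]
  intro k hk
  exact h k _ _ (List.getElem?_eq_getElem _) (List.getElem?_eq_getElem _)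

lemma chainLE {l : List (ℕ × Bool)}
    (h : List.Chain' (fun x y => pKey x ≤ pKey y) l) {j k : ℕ} {x y : ℕ × Bool}
    (hjk : j ≤ k) (hx : l[j]? = some x) (hy : l[k]? = some y) :
    pKey x ≤ pKey y := by
  rcases eq_or_lt_of_le hjk with rfl | hlt
  · rw [hx] at hy; cases hy; exact le_refl _
  · haveI : IsTrans (ℕ × Bool) (fun x y => pKey x ≤ pKey y) :=
      ⟨fun _ _ _ h1 h2 => le_trans h1 h2⟩
    have hp := (List.isChain_iff_pairwise.mp h)
    rw [List.pairwise_iff_get] at hp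
    rcases List.getElem?_eq_some_iff.mp hx with ⟨hj', rfl⟩
    rcases List.getElem?_eq_some_iff.mp hy with ⟨hk', rfl⟩
    exact hp ⟨j, hj'⟩ ⟨k, hk'⟩ hlt

lemma chain_set {r : List (ℕ × Bool)} {i : ℕ} {a : ℕ × Bool}
    (hc : List.Chain' (fun x y => pKey x ≤ pKey y) r) (hi : i < r.length)
    (hleft : ∀ x, 1 ≤ i → r[i-1]? = some x → pKey x ≤ pKey a)
    (hright : ∀ y, r[i+1]? = some y → pKey a ≤ pKey y) :
    List.Chain' (fun x y => pKey x ≤ pKey y) (r.set i a) := by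
  have hgeti : (r.set i a)[i]? = some a := by
    rw [List.getElem?_set_self']
    rcases List.getElem?_eq_some_iff.mp (List.getElem?_eq_getElem hi) with ⟨h, _⟩
    rw [List.getElem?_eq_getElem hi]; rfl
  apply chain'_of_get?
  intro k x y hx hy
  by_cases hk : k = i
  · subst hk
    rw [hgeti] at hx; cases hx
    have hk1 : k ≠ k + 1 := by omega
    rw [List.getElem?_set_ne hk1] at hy
    exact hright y hy
  · rw [List.getElem?_set_ne (fun e => hk e.symm)] at hx
    by_cases hk1 : k + 1 = i
    · rw [hk1, hgeti] at hy; cases hy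
      have : i - 1 = k := by omega
      exact hleft x (by omega) (by rwa [this])
    · rw [List.getElem?_set_ne (fun e => hk1 e.symm)] at hy
      exact chainLE hc (by omega) hx hy

lemma set_self {α} {l : List α} {n : ℕ} {a : α} (h : l[n]? = some a) :
    l.set n a = l := by
  apply List.ext_getElem?
  intro k
  by_cases hk : k = n
  · subst hk; rw [List.getElem?_set_self', h]; rfl
  · rw [List.getElem?_set_ne (fun e => hk e.symm)]

lemma two_le_filter {α} [DecidableEq α] :
    ∀ (l : List α) (j k : ℕ) (a : α), j < k → l[j]? = some a →
      l[k]? = some a → 2 ≤ (l.filter (fun x => decide (x = a))).length := by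
  intro l
  induction l with
  | nil => intro j k a _ h; simp at h
  | cons b l ih =>
    intro j k a hjk hj hk
    cases j with
    | zero =>
      simp only [List.getElem?_cons_zero, Option.some.injEq] at hj
      subst hj
      cases k with
      | zero => omega
      | succ n =>
        simp only [List.getElem?_cons_succ] at hk
        have hmem : b ∈ l := List.mem_of_getElem? hk
        have : b ∈ l.filter (fun x => decide (x = b)) :=
          List.mem_filter.mpr ⟨hmem, by simp⟩
        have h1 : 1 ≤ (l.filter (fun x => decide (x = b))).length :=
          List.length_pos_iff.mpr (List.ne_nil_of_mem this)
        have h2 : ((b :: l).filter (fun x => decide (x = b))).length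
            = (l.filter (fun x => decide (x = b))).length + 1 := by
          simp [List.filter_cons]
        omega
    | succ n =>
      cases k with
      | zero => omega
      | succ p =>
        simp only [List.getElem?_cons_succ] at hj hk
        have := ih n p a (by omega) hj hk
        simp only [List.filter_cons]
        split
        · simp only [List.length_cons]; omega
        · exact this
lemma aux6 {α} [DecidableEq α] :
    ∀ (l : List α) (i : ℕ) (a : α), (∀ k, k ≠ i → l[k]? ≠ some a) →
      ((l.set i a).filter (fun x => decide (x = a))).length ≤ 1 := by
  intro l
  induction l with
  | nil => intro i a _; simp
  | cons b l ih =>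
    intro i a h
    cases i with
    | zero =>
      simp only [List.set_cons_zero, List.filter_cons, decide_true, if_pos]
      have hnil : l.filter (fun x => decide (x = a)) = [] := by
        apply List.filter_eq_nil_iff.mpr
        intro x hx
        rcases List.mem_iff_getElem?.mp hx with ⟨n, hn⟩
        simp only [decide_eq_true_eq]
        intro rfl_eq
        exact h (n+1) (by omega) (by simpa [rfl_eq] using hn)
      simp [hnil]
    | succ n =>
      have hb : b ≠ a := by
        intro e; exact h 0 (by omega) (by simp [e])
      simp only [List.set_cons_succ, List.filter_cons]
      have : (decide (b = a)) = false := by simp [hb]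
      rw [this]
      simp only [if_neg Bool.false_ne_true]
      exact ih n a (fun k hk => by simpa using h (k+1) (by omega))

lemma aux6' {α} :
    ∀ (l : List α) (i : ℕ) (a : α) (p : α → Bool), p a = false →
      ((l.set i a).filter p).length ≤ (l.filter p).length := by
  intro l
  induction l with
  | nil => intro i a p _; simp
  | cons b l ih =>
    intro i a p hp
    cases i with
    | zero =>
      simp only [List.set_cons_zero, List.filter_cons, hp]
      simp only [if_neg Bool.false_ne_true]
      split
      · simp only [List.length_cons]; omega
      · exact le_refl _
    | succ n =>
      simp only [List.set_cons_succ, List.filter_cons]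
      split
      · simp only [List.length_cons]
        exact Nat.succ_le_succ (ih n a p hp)
      · exact ih n a p hp

lemma colLE {m : ℕ} {Q : PrimedTab} (hQ : IsPrimedTab m Q) :
    ∀ (d r c : ℕ) (x y : ℕ × Bool), r + d ≤ c →
      (Q.getD (r+d) [])[c - (r+d)]? = some x →
      (Q.getD r [])[c - r]? = some y → pKey y ≤ pKey x := by
  obtain ⟨h1, h2, _, _, h5, _, _, _⟩ := hQ
  intro d
  induction d with
  | zero => intro r c x y _ hx hy; simp only [Nat.add_zero] at hx; rw [hx] at hy; cases hy; exact le_refl _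
  | succ n ih =>
    intro r c x y hrc hx hy
    -- row r+n+1 exists
    have hlt : r + n + 1 < Q.length := by
      by_contra hc
      rw [List.getD_eq_default _ _ (by omega : Q.length ≤ r + (n+1))] at hx
      simp at hx
    -- lengths decreasing at step r+n
    have hlen : (Q.getD (r+n+1) []).length < (Q.getD (r+n) []).length := by
      rw [List.Chain', List.isChain_iff_getElem] at h2
      have := h2 (r+n) (by omega)
      rw [List.getD_eq_getElem _ _ (by omega : r+n+1 < Q.length),
        List.getD_eq_getElem _ _ (by omega : r+n < Q.length)]
      simpa using this
    have hxl : c - (r + (n+1)) < (Q.getD (r+n+1) []).length := by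
      rcases List.getElem?_eq_some_iff.mp hx with ⟨h, _⟩
      have e : r + (n+1) = r + n + 1 := by omega
      rwa [e] at h
    have hzl : c - (r + n) < (Q.getD (r+n) []).length := by omega
    obtain ⟨z, hz⟩ : ∃ z, (Q.getD (r+n) [])[c - (r+n)]? = some z :=
      ⟨_, List.getElem?_eq_getElem hzl⟩
    have step : pKey z ≤ pKey x := by
      apply h5 (r+n) (c - (r+n+1)) x z
      · have e : r + (n+1) = (r+n) + 1 := by omega
        rwa [e] at hx
      · have e : c - (r+n+1) + 1 = c - (r+n) := by omega
        rwa [e]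
    exact le_trans (ih r c z y (by omega) hz hy) step

lemma set_preserve {m : ℕ} {r : List (ℕ × Bool)} {rest : PrimedTab} {i : ℕ}
    {a old : ℕ × Bool}
    (hT : IsPrimedTab m (r :: rest))
    (hold : r[i]? = some old)
    (ha : 1 ≤ a.1 ∧ a.1 ≤ m)
    (hrow : List.Chain' (fun x y => pKey x ≤ pKey y) (r.set i a))
    (hdiag : i = 0 → a.2 = false)
    (hcol : ∀ x, 1 ≤ i → (rest.getD 0 [])[i-1]? = some x → pKey a ≤ pKey x)
    (hprime : a.2 = true → ∀ k, k ≠ i → r[k]? ≠ some a)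
    (hunpr : a.2 = false → ∀ n, n + 1 ≤ i →
      (rest.getD n [])[i - (n+1)]? ≠ some a) :
    IsPrimedTab m ((r.set i a) :: rest) := by
  obtain ⟨h1, h2, h3, h4, h5, h6, h7, h8⟩ := hT
  have hi : i < r.length := by rcases List.getElem?_eq_some_iff.mp hold with ⟨h, _⟩; exact h
  have hgeti : (r.set i a)[i]? = some a := by
    rw [List.getElem?_set_self', hold]; rfl
  have hgetne : ∀ k, k ≠ i → (r.set i a)[k]? = r[k]? :=
    fun k hk => List.getElem?_set_ne (fun e => hk e.symm)
  refine ⟨?_, ?_, ?_, ?_, ?_, ?_, ?_, ?_⟩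
  · -- rows nonempty
    intro s hs
    rcases List.mem_cons.mp hs with rfl | hs
    · have := h1 r (List.mem_cons_self)
      intro hc
      apply this
      have : r.length = 0 := by rw [← List.length_set (as := r) (i := i) (a := a), hc]; rfl
      exact List.length_eq_zero_iff.mp this
    · exact h1 s (List.mem_cons_of_mem _ hs)
  · -- length chain
    cases rest with
    | nil => simp [List.Chain']
    | cons s rest' =>
      rw [List.Chain', List.isChain_cons_cons] at h2 ⊢
      exact ⟨by rw [List.length_set]; exact h2.1, h2.2⟩
  · -- bounds
    intro s hs x hx
    rcases List.mem_cons.mp hs with rfl | hs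
    · rcases List.mem_or_eq_of_mem_set hx with hx | rfl
      · exact h3 r (List.mem_cons_self) x hx
      · exact ha
    · exact h3 s (List.mem_cons_of_mem _ hs) x hx
  · -- row chains
    intro s hs
    rcases List.mem_cons.mp hs with rfl | hs
    · exact hrow
    · exact h4 s (List.mem_cons_of_mem _ hs)
  · -- columns
    intro i' k x y hx hy
    cases i' with
    | zero =>
      simp only [List.getD_cons_succ, List.getD_cons_zero] at hx hy
      by_cases hk : k + 1 = i
      · rw [hk, hgeti] at hy; cases hy
        apply hcol x (by omega)
        have e : i - 1 = k := by omega
        rwa [e]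
      · rw [hgetne _ hk] at hy
        exact h5 0 k x y (by simpa using hx) (by simpa using hy)
    | succ n =>
      simp only [List.getD_cons_succ] at hx hy
      exact h5 (n+1) k x y (by simpa using hx) (by simpa using hy)
  · -- primes per row
    intro s hs v
    rcases List.mem_cons.mp hs with rfl | hs
    · by_cases hav : a = (v, true)
      · subst hav
        exact aux6 r i _ (hprime rfl)
      · calc ((r.set i a).filter (fun x => decide (x = (v, true)))).length
            ≤ (r.filter (fun x => decide (x = (v, true)))).length :=
              aux6' r i a _ (by simp [hav])
          _ ≤ 1 := h6 r (List.mem_cons_self) v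
    · exact h6 s (List.mem_cons_of_mem _ hs) v
  · -- column uniqueness of unprimed
    intro c r1 r2 v hr hr2 hx hy
    cases r1 with
    | zero =>
      cases r2 with
      | zero => omega
      | succ n =>
        simp only [List.getD_cons_succ, List.getD_cons_zero, Nat.sub_zero] at hx hy
        by_cases hc : c = i
        · subst hc
          rw [hgeti] at hx; cases hx
          exact hunpr rfl n (by omega) hy
        · rw [hgetne _ hc] at hx
          exact h7 c 0 (n+1) v hr hr2 (by simpa using hx) (by simpa using hy)
    | succ n1 =>
      cases r2 with
      | zero => omega
      | succ n2 =>
        simp only [List.getD_cons_succ] at hx hy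
        exact h7 c (n1+1) (n2+1) v hr hr2 (by simpa using hx) (by simpa using hy)
  · -- no primes on diagonal
    intro r' x hx
    cases r' with
    | zero =>
      simp only [List.getD_cons_zero] at hx
      by_cases h0 : i = 0
      · subst h0; rw [hgeti] at hx; cases hx; exact hdiag rfl
      · rw [hgetne _ (fun e => h0 e.symm)] at hx
        exact h8 0 x (by simpa using hx)
    | succ n =>
      simp only [List.getD_cons_succ] at hx
      exact h8 (n+1) x (by simpa using hx)
lemma fOdd_nil : fOdd [] = none := rfl
lemma eOdd_nil : eOdd [] = none := rfl

lemma fOdd_cons (r : List (ℕ × Bool)) (rest : PrimedTab) :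
    fOdd (r :: rest) =
      if (1, false) ∈ r then
        if r[(r.length - 1 - r.reverse.idxOf (1, false)) + 1]?
            = some (2, true) then none
        else some ((r.set (r.length - 1 - r.reverse.idxOf (1, false))
          (if (r.length - 1 - r.reverse.idxOf (1, false)) = 0
            then (2, false) else (2, true))) :: rest)
      else none := rfl

lemma eOdd_cons (r : List (ℕ × Bool)) (rest : PrimedTab) :
    eOdd (r :: rest) =
      if r[0]? = some (2, false) then some ((r.set 0 (1, false)) :: rest)
      else if (2, true) ∈ r then
        some ((r.set (r.idxOf (2, true)) (1, false)) :: rest)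
      else none := rfl

lemma fOdd_good {m : ℕ} (hm : 2 ≤ m) {T S : PrimedTab} (hT : IsPrimedTab m T)
    (h : fOdd T = some S) : IsPrimedTab m S ∧ eOdd S = some T := by
  cases T with
  | nil => rw [fOdd_nil] at h; cases h
  | cons r rest =>
    rw [fOdd_cons] at h
    by_cases hmem : (1, false) ∈ r
    swap
    · rw [if_neg hmem] at h; cases h
    rw [if_pos hmem] at h
    set i := r.length - 1 - r.reverse.idxOf (1, false) with hidef
    by_cases hguard : r[i+1]? = some (2, true)
    · rw [if_pos hguard] at h; cases h
    rw [if_neg hguard] at h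
    have hchain : List.Chain' (fun x y => pKey x ≤ pKey y) r :=
      hT.2.2.2.1 r (List.mem_cons_self)
    have hi_get : r[i]? = some (1, false) := by rw [hidef]; exact rI_get? hmem
    have hi_max : ∀ k, i < k → r[k]? ≠ some (1, false) := by
      rw [hidef]; exact rI_max hmem
    have hilen : i < r.length := (List.getElem?_eq_some_iff.mp hi_get).1
    have hnb : ∀ y, r[i+1]? = some y → 4 ≤ pKey y := by
      intro y hy
      have h2 : 2 ≤ pKey y := by
        have := chainLE hchain (Nat.le_succ i) hi_get hy
        rwa [pkey_1f] at this
      by_cases e2 : pKey y = 2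
      · exact absurd (by rw [pkey2.mp e2] at hy; exact hy) (hi_max (i+1) (by omega))
      by_cases e3 : pKey y = 3
      · exact absurd (by rw [pkey3.mp e3] at hy; exact hy) hguard
      omega
    by_cases hi0 : i = 0
    · rw [if_pos hi0] at h
      rw [hi0] at h hi_get hnb hguard hilen
      injection h with h
      subst h
      constructor
      · refine set_preserve hT hi_get ⟨by omega, hm⟩ ?_ (fun _ => rfl)
          (fun x hx _ => absurd hx (by omega))
          (fun hf => by simp at hf)
          (fun _ n hn => absurd hn (by omega))
        exact chain_set hchain hilen (fun x hx _ => absurd hx (by omega))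
          (fun y hy => by rw [pkey_2f]; exact hnb y hy)
      · rw [eOdd_cons]
        have hg0 : (r.set 0 (2, false))[0]? = some (2, false) := by
          rw [List.getElem?_set_self', hi_get]; rfl
        rw [if_pos hg0, List.set_set, set_self hi_get]
    · rw [if_neg hi0] at h
      injection h with h
      subst h
      have hi1 : 1 ≤ i := by omega
      constructor
      · refine set_preserve hT hi_get ⟨by omega, hm⟩ ?_ (fun e => absurd e hi0)
          ?_ ?_ (fun hf => by simp at hf)
        · refine chain_set hchain hilen (fun x _ hx => ?_) (fun y hy => ?_)
          · have := chainLE hchain (by omega : i - 1 ≤ i) hx hi_get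
            rw [pkey_1f] at this; rw [pkey_2t]; omega
          · have := hnb y hy; rw [pkey_2t]; omega
        · -- hcol
          intro x _ hx
          have h5 := hT.2.2.2.2.1 0 (i-1) x (1, false)
            (by simpa using hx)
            (by have e : i - 1 + 1 = i := by omega
                rw [List.getD_cons_zero, e]; exact hi_get)
          rw [pkey_1f] at h5
          have hxne : x ≠ (1, false) := by
            intro hxe
            exact hT.2.2.2.2.2.2.1 i 0 1 1 (by omega) (by omega)
              (by simpa using hi_get)
              (by rw [hxe] at hx; exact hx)
          have : pKey x ≠ 2 := fun e => hxne (pkey2.mp e)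
          rw [pkey_2t]; omega
        · -- hprime
          intro _ k hk hka
          rcases lt_trichotomy k i with hlt | heq | hgt
          · have := chainLE hchain (le_of_lt hlt) hka hi_get
            rw [pkey_1f, pkey_2t] at this; omega
          · exact hk heq
          · by_cases hk1 : k = i + 1
            · rw [hk1] at hka; exact hguard hka
            · have hklen : k < r.length := (List.getElem?_eq_some_iff.mp hka).1
              obtain ⟨y, hy⟩ : ∃ y, r[i+1]? = some y :=
                ⟨_, List.getElem?_eq_getElem (by omega)⟩
              have h4y := hnb y hy
              have := chainLE hchain (by omega : i + 1 ≤ k) hy hka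
              rw [pkey_2t] at this; omega
      · rw [eOdd_cons]
        have hs_geti : (r.set i (2, true))[i]? = some (2, true) := by
          rw [List.getElem?_set_self', hi_get]; rfl
        have hkey0 : ∀ x, r[0]? = some x → pKey x ≤ 2 := fun x hx => by
          have := chainLE hchain (by omega : 0 ≤ i) hx hi_get
          rwa [pkey_1f] at this
        have hne : ¬ (r.set i (2, true))[0]? = some (2, false) := by
          rw [List.getElem?_set_ne hi0]
          intro hc
          have := hkey0 _ hc
          rw [pkey_2f] at this; omega
        rw [if_neg hne]
        have hmem2 : (2, true) ∈ r.set i (2, true) := List.mem_of_getElem? hs_geti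
        rw [if_pos hmem2]
        have hidx : (r.set i (2, true)).idxOf (2, true) = i := by
          apply idx_eq hs_geti
          intro k hk hc
          rw [List.getElem?_set_ne (by omega : i ≠ k)] at hc
          have := chainLE hchain (le_of_lt hk) hc hi_get
          rw [pkey_1f, pkey_2t] at this; omega
        rw [hidx, List.set_set, set_self hi_get]

lemma eOdd_good {m : ℕ} (hm : 2 ≤ m) {S T : PrimedTab} (hS : IsPrimedTab m S)
    (h : eOdd S = some T) : IsPrimedTab m T ∧ fOdd T = some S := by
  cases S with
  | nil => rw [eOdd_nil] at h; cases h
  | cons s rest =>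
    rw [eOdd_cons] at h
    have hchain : List.Chain' (fun x y => pKey x ≤ pKey y) s :=
      hS.2.2.2.1 s (List.mem_cons_self)
    by_cases h1 : s[0]? = some (2, false)
    · rw [if_pos h1] at h
      injection h with h
      subst h
      have h0len : 0 < s.length := (List.getElem?_eq_some_iff.mp h1).1
      have hbig : ∀ k y, 1 ≤ k → s[k]? = some y → 4 ≤ pKey y := by
        intro k y hk hy
        have := chainLE hchain (by omega : 0 ≤ k) h1 hy
        rwa [pkey_2f] at this
      constructor
      · refine set_preserve hS h1 ⟨by omega, by omega⟩ ?_ (fun _ => rfl)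
          (fun x hx _ => absurd hx (by omega))
          (fun hf => by simp at hf)
          (fun _ n hn => absurd hn (by omega))
        exact chain_set hchain h0len (fun x hx _ => absurd hx (by omega))
          (fun y hy => by have := hbig 1 y (by omega) hy; rw [pkey_1f]; omega)
      · rw [fOdd_cons]
        have ht0 : (s.set 0 (1, false))[0]? = some (1, false) := by
          rw [List.getElem?_set_self', h1]; rfl
        have hmemt : (1, false) ∈ s.set 0 (1, false) := List.mem_of_getElem? ht0
        rw [if_pos hmemt]
        have hrmax : ∀ k, 0 < k → (s.set 0 (1, false))[k]? ≠ some (1, false) := by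
          intro k hk hc
          rw [List.getElem?_set_ne (by omega : 0 ≠ k)] at hc
          have := hbig k _ (by omega) hc
          rw [pkey_1f] at this; omega
        have hri : (s.set 0 (1, false)).length - 1 -
            (s.set 0 (1, false)).reverse.idxOf (1, false) = 0 := rI_eq ht0 hrmax
        rw [hri]
        have hg1 : ¬ (s.set 0 (1, false))[0+1]? = some (2, true) := by
          intro hc
          rw [List.getElem?_set_ne (by omega : 0 ≠ 0 + 1)] at hc
          have := hbig 1 _ (by omega) hc
          rw [pkey_2t] at this; omega
        rw [if_neg hg1, if_pos rfl, List.set_set, set_self h1]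
    · rw [if_neg h1] at h
      by_cases h2 : (2, true) ∈ s
      swap
      · rw [if_neg h2] at h; cases h
      rw [if_pos h2] at h
      injection h with h
      subst h
      set j := s.idxOf (2, true) with hjdef
      have hj_get : s[j]? = some (2, true) := by rw [hjdef]; exact idx_get? h2
      have hj_min : ∀ k, k < j → s[k]? ≠ some (2, true) := by
        rw [hjdef]; exact fun k hk => idx_min hk
      have hjlen : j < s.length := (List.getElem?_eq_some_iff.mp hj_get).1
      have hj1 : 1 ≤ j := by
        rcases Nat.eq_zero_or_pos j with hj0 | hp
        · exfalso
          rw [hj0] at hj_get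
          have := hS.2.2.2.2.2.2.2 0 (2, true) (by simpa using hj_get)
          simp at this
        · exact hp
      have hrightkey : ∀ k y, j < k → s[k]? = some y → 4 ≤ pKey y := by
        intro k y hk hy
        have h3le : 3 ≤ pKey y := by
          have := chainLE hchain (le_of_lt hk) hj_get hy
          rwa [pkey_2t] at this
        by_cases e : pKey y = 3
        · exfalso
          have h2f := two_le_filter s j k (2, true) hk hj_get
            (by rw [pkey3.mp e] at hy; exact hy)
          have hle1 := hS.2.2.2.2.2.1 s (List.mem_cons_self) 2
          omega
        · omega
      constructor
      · refine set_preserve hS hj_get ⟨by omega, by omega⟩ ?_ (fun _ => rfl)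
          ?_ (fun hf => by simp at hf) ?_
        · refine chain_set hchain hjlen (fun x _ hx => ?_) (fun y hy => ?_)
          · have h3le : pKey x ≤ 3 := by
              have := chainLE hchain (by omega : j - 1 ≤ j) hx hj_get
              rwa [pkey_2t] at this
            by_cases e : pKey x = 3
            · exact absurd (by rw [pkey3.mp e] at hx; exact hx)
                (hj_min (j-1) (by omega))
            · rw [pkey_1f]; omega
          · have := hrightkey (j+1) y (by omega) hy
            rw [pkey_1f]; omega
        · -- hcol
          intro x _ hx
          have h5 := hS.2.2.2.2.1 0 (j-1) x (2, true)
            (by simpa using hx)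
            (by have e : j - 1 + 1 = j := by omega
                rw [List.getD_cons_zero, e]; exact hj_get)
          rw [pkey_2t] at h5
          rw [pkey_1f]; omega
        · -- hunpr
          intro _ n hn hc
          have := colLE hS (n+1) 0 j (1, false) (2, true) (by omega)
            (by simpa using hc)
            (by simpa using hj_get)
          rw [pkey_1f, pkey_2t] at this; omega
      · rw [fOdd_cons]
        have ht_get : (s.set j (1, false))[j]? = some (1, false) := by
          rw [List.getElem?_set_self', hj_get]; rfl
        have hmemt : (1, false) ∈ s.set j (1, false) := List.mem_of_getElem? ht_get
        rw [if_pos hmemt]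
        have hrmax : ∀ k, j < k → (s.set j (1, false))[k]? ≠ some (1, false) := by
          intro k hk hc
          rw [List.getElem?_set_ne (by omega : j ≠ k)] at hc
          have := hrightkey k _ hk hc
          rw [pkey_1f] at this; omega
        have hri : (s.set j (1, false)).length - 1 -
            (s.set j (1, false)).reverse.idxOf (1, false) = j := rI_eq ht_get hrmax
        rw [hri]
        have hg : ¬ (s.set j (1, false))[j+1]? = some (2, true) := by
          intro hc
          rw [List.getElem?_set_ne (by omega : j ≠ j + 1)] at hc
          have := hrightkey (j+1) _ (by omega) hc
          rw [pkey_2t] at this; omega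
        rw [if_neg hg, if_neg (by omega : ¬ j = 0), List.set_set, set_self hj_get]

/-- The odd operators `f̃₁′` and `ẽ₁′` on `PT_m(λ)` are well defined (their values are
again primed tableaux) and are mutually inverse partial operators:
`f̃₁′(T) = S ↔ ẽ₁′(S) = T`. -/
theorem odd_operators_well_defined_and_inverse (m : ℕ) (hm : 2 ≤ m)
    (S T : PrimedTab) (hS : IsPrimedTab m S) (hT : IsPrimedTab m T) :
    (∀ U, fOdd T = some U → IsPrimedTab m U) ∧
    (∀ U, eOdd T = some U → IsPrimedTab m U) ∧
    (fOdd T = some S ↔ eOdd S = some T) := by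
  refine ⟨fun U hU => (fOdd_good hm hT hU).1,
    fun U hU => (eOdd_good hm hT hU).1,
    fun h => (fOdd_good hm hT h).2,
    fun h => (eOdd_good hm hS h).2⟩
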